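/- Let g : 𝔻 → ℂ be a holomorphic map on the unit disc of the form g(z) = z^m·u(z) with u holomorphic, u(0) ≠ 0, and 1 ≤ m ≤ δ. Then there exist a constant M ≥ 1 and a radius r > 0 such that for all w₁, w₂ in the disc of radius r around 0, the m preimage multisets g⁻¹(w₁) ∩ 𝔻(0,r') and g⁻¹(w₂) ∩ 𝔻(0,r') (for suitable r') can be matched into pairs (x_j, y_j) with |x_j − y_j| ≤ M·|w₁ − w₂|^{1/m} ≤ M·|w₁ − w₂|^{1/δ}. -/

import Mathlib

open Polynomial Complex Metric Filter Real

private lemma prod_roots_identity (m : ℕ) (hm : m ≠ 0) {ζ : ℂ} (hζ : IsPrimitiveRoot ζ m)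
    {s w : ℂ} (hs : s ^ m = w) (t : ℂ) :
    ∏ j ∈ Finset.range m, (t - ζ ^ j * s) = t ^ m - w := by
  have hmonic : (Polynomial.X ^ m - Polynomial.C w).Monic :=
    Polynomial.monic_X_pow_sub_C w hm
  have hsplit : (Polynomial.X ^ m - Polynomial.C w).Splits :=
    IsAlgClosed.splits _
  have hev := hsplit.eval_eq_prod_roots_of_monic hmonic t
  have hroots : (Polynomial.X ^ m - Polynomial.C w).roots = Polynomial.nthRoots m w := rfl
  rw [hroots, hζ.nthRoots_eq hs, Multiset.map_map] at hev
  have hev' : t ^ m - w = ((Multiset.range m).map fun j => t - ζ ^ j * s).prod := by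
    simpa using hev
  rw [hev']
  rfl

private lemma root_match (m : ℕ) (hm : m ≠ 0) {ζ : ℂ} (hζ : IsPrimitiveRoot ζ m) (t₁ w₂ : ℂ) :
    ∃ t₂ : ℂ, t₂ ^ m = w₂ ∧
      ‖t₁ - t₂‖ ≤ ‖t₁ ^ m - w₂‖ ^ ((m : ℝ)⁻¹) := by
  set d : ℝ := ‖t₁ ^ m - w₂‖ with hd_def
  have hd0 : 0 ≤ d := norm_nonneg _
  by_cases hd : d = 0
  · refine ⟨t₁, ?_, ?_⟩
    · have : t₁ ^ m - w₂ = 0 := by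
        simpa [hd_def] using (norm_eq_zero.mp hd)
      exact sub_eq_zero.mp this
    · simp [Real.rpow_nonneg hd0]
  · have hdpos : 0 < d := lt_of_le_of_ne hd0 (Ne.symm hd)
    set b : ℝ := d ^ ((m : ℝ)⁻¹) with hb_def
    have hbpos : 0 < b := Real.rpow_pos_of_pos hdpos _
    obtain ⟨s, hs⟩ := IsAlgClosed.exists_pow_nat_eq w₂ (Nat.pos_of_ne_zero hm)
    have key : ∃ j ∈ Finset.range m, ‖t₁ - ζ ^ j * s‖ ≤ b := by
      by_contra h
      push_neg at h
      have h1 : ∏ _j ∈ Finset.range m, b <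
          ∏ j ∈ Finset.range m, ‖t₁ - ζ ^ j * s‖ :=
        Finset.prod_lt_prod_of_nonempty (fun _ _ => hbpos) h
          (Finset.nonempty_range_iff.mpr hm)
      rw [Finset.prod_const, Finset.card_range] at h1
      have hbm : b ^ m = d := Real.rpow_inv_natCast_pow hd0 hm
      have h2 : ∏ j ∈ Finset.range m, ‖t₁ - ζ ^ j * s‖ = d := by
        rw [← norm_prod, prod_roots_identity m hm hζ hs]
      rw [hbm, h2] at h1
      exact lt_irrefl _ h1
    obtain ⟨j, _, hj⟩ := key
    refine ⟨ζ ^ j * s, ?_, hj⟩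
    rw [mul_pow, ← pow_mul, mul_comm j m, pow_mul, hζ.pow_eq_one, one_pow, one_mul, hs]

theorem stmt16 (m : ℕ) (δ : ℝ) (hm : 1 ≤ m) (hδ : (m : ℝ) ≤ δ)
    (g u : ℂ → ℂ) (hu : DifferentiableOn ℂ u (Metric.ball 0 1))
    (hu0 : u 0 ≠ 0)
    (hg : ∀ z ∈ Metric.ball (0 : ℂ) 1, g z = z ^ m * u z) :
    ∃ M ≥ (1 : ℝ), ∃ r > (0 : ℝ), ∃ r' > (0 : ℝ),
      ∀ w₁ ∈ Metric.ball (0 : ℂ) r, ∀ w₂ ∈ Metric.ball (0 : ℂ) r,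
        ∃ x y : Fin m → ℂ,
          (∀ j, x j ∈ Metric.ball (0 : ℂ) r' ∧ g (x j) = w₁) ∧
          (∀ j, y j ∈ Metric.ball (0 : ℂ) r' ∧ g (y j) = w₂) ∧
          (∀ z ∈ Metric.ball (0 : ℂ) r', g z = w₁ → ∃ j, x j = z) ∧
          (∀ z ∈ Metric.ball (0 : ℂ) r', g z = w₂ → ∃ j, y j = z) ∧
          ∀ j, ‖x j - y j‖ ≤ M * ‖w₁ - w₂‖ ^ (1 / δ) := by
  have hm0 : m ≠ 0 := by omega
  haveI : NeZero m := ⟨hm0⟩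
  have hmem1 : (0 : ℂ) ∈ Metric.ball (0 : ℂ) 1 := by simp
  have hδpos : (0 : ℝ) < δ := lt_of_lt_of_le (by exact_mod_cast Nat.pos_of_ne_zero hm0) hδ
  -- analytic setup
  have hu_an : AnalyticAt ℂ u 0 := hu.analyticAt (Metric.isOpen_ball.mem_nhds hmem1)
  obtain ⟨c, hc⟩ := IsAlgClosed.exists_pow_nat_eq (u 0) (Nat.pos_of_ne_zero hm0)
  have hc0 : c ≠ 0 := by
    intro h; apply hu0; rw [← hc, h, zero_pow hm0]
  set q : ℂ → ℂ := fun z => u z / u 0 with hq_def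
  have hq_an : AnalyticAt ℂ q 0 := hu_an.div analyticAt_const hu0
  have hq0 : q 0 = 1 := div_self hu0
  have hlog_an : AnalyticAt ℂ (fun z => Complex.log (q z)) 0 := by
    have h1 : q 0 ∈ Complex.slitPlane := by rw [hq0]; exact Complex.one_mem_slitPlane
    exact (analyticAt_clog h1).comp hq_an
  set v : ℂ → ℂ := fun z => c * Complex.exp (Complex.log (q z) / m) with hv_def
  have hv_an : AnalyticAt ℂ v 0 := by
    apply analyticAt_const.mul
    exact (Complex.differentiable_exp.analyticAt _).comp (hlog_an.div analyticAt_const (by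
      exact_mod_cast (Nat.cast_ne_zero (R := ℂ)).mpr hm0))
  have hv0 : v 0 = c := by
    simp [hv_def, hq0, Complex.log_one]
  -- v ^ m = u near 0
  have hvm : ∀ᶠ z in nhds (0 : ℂ), v z ^ m = u z := by
    have hu_cont : ContinuousAt u 0 := hu_an.continuousAt
    filter_upwards [hu_cont.eventually_ne hu0] with z hz
    have hqz : q z ≠ 0 := div_ne_zero hz hu0
    have hmc : (m : ℂ) ≠ 0 := (Nat.cast_ne_zero (R := ℂ)).mpr hm0
    calc v z ^ m = c ^ m * Complex.exp (Complex.log (q z) / m) ^ m := mul_pow _ _ _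
      _ = u 0 * Complex.exp ((m : ℂ) * (Complex.log (q z) / m)) := by
          rw [hc, Complex.exp_nat_mul]
      _ = u 0 * Complex.exp (Complex.log (q z)) := by
          congr 1; congr 1; field_simp
      _ = u 0 * q z := by rw [Complex.exp_log hqz]
      _ = u z := by rw [hq_def]; field_simp
  -- the local chart f z = z * v z
  set f : ℂ → ℂ := fun z => z * v z with hf_def
  have hf0 : f 0 = 0 := by simp [hf_def]
  have hv_strict : HasStrictDerivAt v (deriv v 0) 0 :=
    (hv_an.contDiffAt).hasStrictDerivAt (n := 1) one_ne_zero
  have hf_strict : HasStrictDerivAt f c 0 := by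
    have := (hasStrictDerivAt_id (0 : ℂ) : HasStrictDerivAt (fun z : ℂ => z) 1 0).mul hv_strict
    simp only [hv0, one_mul, zero_mul, add_zero] at this
    exact this.congr_deriv (by simp)
  have hF := hf_strict.hasStrictFDerivAt_equiv hc0
  set ψ : ℂ → ℂ := HasStrictFDerivAt.localInverse f _ 0 hF with hψ_def
  have hleft : ∀ᶠ z in nhds (0 : ℂ), ψ (f z) = z := hF.eventually_left_inverse
  have hright : ∀ᶠ t in nhds (0 : ℂ), f (ψ t) = t := by
    have := hF.eventually_right_inverse; rwa [hf0] at this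
  have hψ0 : ψ 0 = 0 := by
    have := hF.localInverse_apply_image; rwa [hf0] at this
  have hψF := hF.to_localInverse
  obtain ⟨K, sψ, hsψ_mem, hlip⟩ := hψF.exists_lipschitzOnWith
  rw [hf0] at hsψ_mem
  set L : ℝ := max (K : ℝ) 1 with hL_def
  have hL1 : (1 : ℝ) ≤ L := le_max_right _ _
  have hLpos : (0 : ℝ) < L := lt_of_lt_of_le one_pos hL1
  -- radius ε₁ in target space
  obtain ⟨ε₁, hε₁pos, hε₁⟩ : ∃ ε > 0, Metric.ball (0 : ℂ) ε ⊆ {t | f (ψ t) = t} ∩ sψ :=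
    Metric.mem_nhds_iff.mp (Filter.inter_mem hright hsψ_mem)
  -- radius r' in source space
  have hf_cont : ContinuousAt f 0 := hf_strict.hasDerivAt.continuousAt
  have hfε : ∀ᶠ z in nhds (0 : ℂ), f z ∈ Metric.ball (0 : ℂ) ε₁ := by
    have : Metric.ball (0 : ℂ) ε₁ ∈ nhds (f 0) := by
      rw [hf0]; exact Metric.ball_mem_nhds _ hε₁pos
    exact hf_cont.preimage_mem_nhds this
  have hball1 : ∀ᶠ z in nhds (0 : ℂ), z ∈ Metric.ball (0 : ℂ) 1 :=
    Metric.isOpen_ball.mem_nhds hmem1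
  obtain ⟨r', hr'pos, hr'sub⟩ : ∃ ε > 0, Metric.ball (0 : ℂ) ε ⊆
      {z | ψ (f z) = z} ∩ ({z | v z ^ m = u z} ∩ ({z | z ∈ Metric.ball (0 : ℂ) 1} ∩
        {z | f z ∈ Metric.ball (0 : ℂ) ε₁})) :=
    Metric.mem_nhds_iff.mp
      (Filter.inter_mem hleft (Filter.inter_mem hvm (Filter.inter_mem hball1 hfε)))
  -- g z = (f z)^m on ball r'
  have hgf : ∀ z ∈ Metric.ball (0 : ℂ) r', g z = f z ^ m ∧ f z ∈ Metric.ball (0 : ℂ) ε₁ := by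
    intro z hz
    obtain ⟨h1, h2, h3, h4⟩ := hr'sub hz
    simp only [Set.mem_setOf_eq] at h1 h2 h3 h4
    refine ⟨?_, h4⟩
    rw [hg z h3, ← h2, hf_def]
    simp [mul_pow]
  set ε₃ : ℝ := min ε₁ (r' / L) with hε₃_def
  have hε₃pos : 0 < ε₃ := lt_min hε₁pos (div_pos hr'pos hLpos)
  have hε₃ε₁ : ε₃ ≤ ε₁ := min_le_left _ _
  set r : ℝ := min ((ε₃ / 2) ^ m) (1 / 2) with hr_def
  have hrpos : 0 < r := lt_min (pow_pos (by linarith) m) (by norm_num)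
  -- Lipschitz-type estimate for ψ on ball ε₁
  have hlipψ : ∀ a b : ℂ, ‖a‖ < ε₁ → ‖b‖ < ε₁ →
      ‖ψ a - ψ b‖ ≤ L * ‖a - b‖ := by
    intro a b ha hb
    have haS : a ∈ sψ :=
      (hε₁ (by rw [mem_ball_zero_iff]; exact ha)).2
    have hbS : b ∈ sψ :=
      (hε₁ (by rw [mem_ball_zero_iff]; exact hb)).2
    have h := hlip.dist_le_mul a haS b hbS
    rw [dist_eq_norm, dist_eq_norm] at h
    calc ‖ψ a - ψ b‖ ≤ K * ‖a - b‖ := h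
      _ ≤ L * ‖a - b‖ :=
          mul_le_mul_of_nonneg_right (le_max_left _ _) (norm_nonneg _)
  -- key property: for small roots t, ψ t is a preimage
  have hkey : ∀ t : ℂ, ‖t‖ < ε₃ →
      ψ t ∈ Metric.ball (0 : ℂ) r' ∧ f (ψ t) = t ∧ g (ψ t) = t ^ m := by
    intro t ht
    have htε₁ : ‖t‖ < ε₁ := lt_of_lt_of_le ht hε₃ε₁
    have htball : t ∈ Metric.ball (0 : ℂ) ε₁ := by
      rw [mem_ball_zero_iff]; exact htε₁
    have hfψt : f (ψ t) = t := (hε₁ htball).1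
    have hψt_small : ‖ψ t‖ < r' := by
      have h0 : ‖(0 : ℂ)‖ < ε₁ := by simpa using hε₁pos
      have := hlipψ t 0 htε₁ h0
      rw [hψ0, sub_zero, sub_zero] at this
      calc ‖ψ t‖ ≤ L * ‖t‖ := this
        _ < L * (r' / L) := by
            apply mul_lt_mul_of_pos_left _ hLpos
            exact lt_of_lt_of_le ht (min_le_right _ _)
        _ = r' := by field_simp
    have hψtball : ψ t ∈ Metric.ball (0 : ℂ) r' := by
      rw [mem_ball_zero_iff]; exact hψt_small
    refine ⟨hψtball, hfψt, ?_⟩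
    rw [(hgf _ hψtball).1, hfψt]
  -- bound for roots of values in ball r
  have hroot_small : ∀ w : ℂ, ‖w‖ < r → ∀ t : ℂ, t ^ m = w →
      ‖t‖ < ε₃ / 2 := by
    intro w hw t ht
    have h1 : ‖t‖ ^ m < (ε₃ / 2) ^ m := by
      rw [← norm_pow, ht]
      exact lt_of_lt_of_le hw (min_le_left _ _)
    exact lt_of_pow_lt_pow_left₀ m (by linarith) h1
  -- primitive root of unity
  set ζ : ℂ := Complex.exp (2 * Real.pi * Complex.I / m) with hζ_def
  have hζ : IsPrimitiveRoot ζ m := Complex.isPrimitiveRoot_exp m hm0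
  have hζabs : ‖ζ‖ = 1 := by
    have : (2 * (Real.pi : ℂ) * Complex.I / m) = ((2 * Real.pi / m : ℝ) : ℂ) * Complex.I := by
      push_cast; ring
    rw [hζ_def, this]
    exact Complex.norm_exp_ofReal_mul_I _
  have hζjabs : ∀ (j : ℕ) (t : ℂ), ‖ζ ^ j * t‖ = ‖t‖ := by
    intro j t
    rw [norm_mul, norm_pow, hζabs, one_pow, one_mul]
  -- final existence
  refine ⟨L, hL1, r, hrpos, r', hr'pos, ?_⟩
  intro w₁ hw₁ w₂ hw₂
  rw [mem_ball_zero_iff] at hw₁ hw₂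
  obtain ⟨t₁, ht₁⟩ := IsAlgClosed.exists_pow_nat_eq w₁ (Nat.pos_of_ne_zero hm0)
  obtain ⟨t₂, ht₂, ht₁₂⟩ := root_match m hm0 hζ t₁ w₂
  have ht₁small : ‖t₁‖ < ε₃ / 2 := hroot_small w₁ hw₁ t₁ ht₁
  have ht₂small : ‖t₂‖ < ε₃ / 2 := hroot_small w₂ hw₂ t₂ ht₂
  -- definitions of the preimage families
  set x : Fin m → ℂ := fun j => ψ (ζ ^ (j : ℕ) * t₁) with hx_def
  set y : Fin m → ℂ := fun j => ψ (ζ ^ (j : ℕ) * t₂) with hy_def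
  have hxprop : ∀ j : Fin m, x j ∈ Metric.ball (0 : ℂ) r' ∧ g (x j) = w₁ := by
    intro j
    have habs : ‖ζ ^ (j : ℕ) * t₁‖ < ε₃ := by
      rw [hζjabs]; linarith
    obtain ⟨h1, _, h3⟩ := hkey _ habs
    refine ⟨h1, ?_⟩
    show g (ψ (ζ ^ (j : ℕ) * t₁)) = w₁
    rw [h3, mul_pow, ← pow_mul, mul_comm (j : ℕ) m, pow_mul, hζ.pow_eq_one, one_pow,
      one_mul, ht₁]
  have hyprop : ∀ j : Fin m, y j ∈ Metric.ball (0 : ℂ) r' ∧ g (y j) = w₂ := by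
    intro j
    have habs : ‖ζ ^ (j : ℕ) * t₂‖ < ε₃ := by
      rw [hζjabs]; linarith
    obtain ⟨h1, _, h3⟩ := hkey _ habs
    refine ⟨h1, ?_⟩
    show g (ψ (ζ ^ (j : ℕ) * t₂)) = w₂
    rw [h3, mul_pow, ← pow_mul, mul_comm (j : ℕ) m, pow_mul, hζ.pow_eq_one, one_pow,
      one_mul, ht₂]
  -- coverage
  have hcover : ∀ (w t₀ : ℂ), t₀ ^ m = w → ‖t₀‖ < ε₃ / 2 →
      ∀ z ∈ Metric.ball (0 : ℂ) r', g z = w → ∃ j : Fin m, ψ (ζ ^ (j : ℕ) * t₀) = z := by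
    intro w t₀ ht₀ ht₀small z hz hgz
    obtain ⟨hgfz, hfzball⟩ := hgf z hz
    have hψfz : ψ (f z) = z := (hr'sub hz).1
    have hfzm : f z ^ m = t₀ ^ m := by rw [ht₀, ← hgz, hgfz]
    by_cases ht0 : t₀ = 0
    · refine ⟨⟨0, Nat.pos_of_ne_zero hm0⟩, ?_⟩
      have hfz0 : f z = 0 := by
        have h := hfzm
        rw [ht0, zero_pow hm0] at h
        exact pow_eq_zero_iff hm0 |>.mp h
      show ψ (ζ ^ ((⟨0, Nat.pos_of_ne_zero hm0⟩ : Fin m) : ℕ) * t₀) = z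
      have hcast : ((⟨0, Nat.pos_of_ne_zero hm0⟩ : Fin m) : ℕ) = 0 := rfl
      rw [hcast, pow_zero, one_mul, ht0, ← hfz0, hψfz]
    · have hξ : (f z / t₀) ^ m = 1 := by
        rw [div_pow, hfzm, div_self (pow_ne_zero m ht0)]
      obtain ⟨i, him, hi⟩ := hζ.eq_pow_of_pow_eq_one hξ
      refine ⟨⟨i, him⟩, ?_⟩
      have : f z = ζ ^ i * t₀ := by
        rw [hi]; field_simp
      rw [← this, hψfz]
  -- the Hölder estimate
  have hbound : ∀ j : Fin m, ‖x j - y j‖ ≤ L * ‖w₁ - w₂‖ ^ (1 / δ) := by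
    intro j
    have ha : ‖ζ ^ (j : ℕ) * t₁‖ < ε₁ := by
      rw [hζjabs]; linarith
    have hb : ‖ζ ^ (j : ℕ) * t₂‖ < ε₁ := by
      rw [hζjabs]; linarith
    have h1 : ‖x j - y j‖ ≤ L * ‖t₁ - t₂‖ := by
      have := hlipψ _ _ ha hb
      calc ‖x j - y j‖
          ≤ L * ‖ζ ^ (j : ℕ) * t₁ - ζ ^ (j : ℕ) * t₂‖ := this
        _ = L * ‖t₁ - t₂‖ := by
            rw [← mul_sub, hζjabs]
    have h2 : ‖t₁ - t₂‖ ≤ ‖w₁ - w₂‖ ^ ((m : ℝ)⁻¹) := by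
      rw [← ht₁]
      exact ht₁₂
    have h3 : ‖w₁ - w₂‖ ^ ((m : ℝ)⁻¹) ≤ ‖w₁ - w₂‖ ^ (1 / δ) := by
      have hab : ‖w₁ - w₂‖ ≤ 1 := by
        have : ‖w₁ - w₂‖ ≤ ‖w₁‖ + ‖w₂‖ := by
          simpa using norm_sub_le w₁ w₂
        have hr12 : r ≤ 1 / 2 := min_le_right _ _
        linarith
      have hexp : 1 / δ ≤ (m : ℝ)⁻¹ := by
        rw [one_div]
        apply inv_anti₀ _ hδ
        exact_mod_cast Nat.pos_of_ne_zero hm0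
      by_cases h0 : ‖w₁ - w₂‖ = 0
      · have h1δ : (1 : ℝ) / δ ≠ 0 := ne_of_gt (by positivity)
        have hmδ : ((m : ℝ))⁻¹ ≠ 0 := inv_ne_zero (by exact_mod_cast hm0)
        rw [h0, Real.zero_rpow hmδ, Real.zero_rpow h1δ]
      · exact Real.rpow_le_rpow_of_exponent_ge
          (lt_of_le_of_ne (norm_nonneg _) (Ne.symm h0)) hab hexp
    calc ‖x j - y j‖ ≤ L * ‖t₁ - t₂‖ := h1
      _ ≤ L * ‖w₁ - w₂‖ ^ ((m : ℝ)⁻¹) :=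
          mul_le_mul_of_nonneg_left h2 (le_of_lt hLpos)
      _ ≤ L * ‖w₁ - w₂‖ ^ (1 / δ) :=
          mul_le_mul_of_nonneg_left h3 (le_of_lt hLpos)
  exact ⟨x, y, hxprop, hyprop,
    hcover w₁ t₁ ht₁ ht₁small, hcover w₂ t₂ ht₂ ht₂small, hbound⟩
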